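/- Let θ be a fixed vector in ℝ^p (unknown true parameter), and define the parameter estimate update θ̂(k) = θ̂(k−d) + η(k) X(k−d) e(k)ᵀ/(1 + ‖X(k−d)‖²), where e(k) = Y(k) − θ̂(k−d)ᵀ X(k−d), Y(k) = θᵀ X(k−d) + h(k) with ‖h(k)‖ ≤ ρ, and η(k) = 1 if ‖e(k)‖ > 2ρ, else 0. Define ψ(k) = θ̂(k) − θ. Then ψ(k) = ψ(k−d) + η(k) X(k−d) e(k)ᵀ/(1 + ‖X(k−d)‖²), and moreover ‖ψ(k)‖² − ‖ψ(k−d)‖² ≤ −η(k)(‖e(k)‖² − 4ρ²)/(2(1 + ‖X(k−d)‖²)) · c for some constant c > 0 whenever η(k) = 1, implying (‖ψ(k)‖) is bounded. -/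

import Mathlib

open Filter Topology Finset

lemma aux_expand (p m : ℕ) (a : Fin p → Fin m → ℝ) (x : Fin p → ℝ) (e : Fin m → ℝ) (c : ℝ) :
    ∑ i, ∑ j, (a i j + c * (x i * e j))^2
    = (∑ i, ∑ j, (a i j)^2) + 2*c*(∑ j, e j * ∑ i, a i j * x i)
      + c^2*(∑ i, (x i)^2)*(∑ j, (e j)^2) := by
  simp only [add_sq, Finset.sum_add_distrib, Finset.mul_sum, Finset.sum_mul, mul_pow]
  rw [Finset.sum_comm (f := fun i j => 2 * a i j * (c * (x i * e j))),
      Finset.sum_comm (f := fun i j => c ^ 2 * (x i ^ 2 * e j ^ 2))]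
  congr 1
  · congr 1
    apply Finset.sum_congr rfl; intro j _
    apply Finset.sum_congr rfl; intro i _; ring
  · apply Finset.sum_congr rfl; intro j _
    apply Finset.sum_congr rfl; intro i _; ring

lemma norm_sq_euclid (n : ℕ) (v : EuclideanSpace ℝ (Fin n)) : ‖v‖^2 = ∑ i, v i ^2 := by
  rw [EuclideanSpace.norm_eq, Real.sq_sqrt (by positivity)]
  simp [sq_abs]

lemma inner_euclid (n : ℕ) (u v : EuclideanSpace ℝ (Fin n)) : ∑ i, u i * v i ≤ ‖u‖ * ‖v‖ := by
  have := real_inner_le_norm u v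
  simpa [PiLp.inner_apply, RCLike.inner_apply, mul_comm] using this

/-- Dead-zone gradient update of the linear adaptive estimator: parameter error
recursion and boundedness.  The parameter estimate is the `p × m` matrix
`θhat k`, the regressor `X k ∈ ℝ^p`, outputs `Y k, e k, h k ∈ ℝ^m`. -/
theorem stmt_6 (m p d : ℕ) (hd : 1 ≤ d) (ρ : ℝ) (hρ : 0 < ρ)
    (θ : Matrix (Fin p) (Fin m) ℝ) (θhat ψ : ℕ → Matrix (Fin p) (Fin m) ℝ)
    (X : ℕ → EuclideanSpace ℝ (Fin p)) (Y e h : ℕ → EuclideanSpace ℝ (Fin m))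
    (η : ℕ → ℝ) (hη : ∀ k, η k = if ‖e k‖ > 2 * ρ then 1 else 0)
    (hh : ∀ k, ‖h k‖ ≤ ρ)
    (hY : ∀ k ≥ d, ∀ j, Y k j = (∑ i, θ i j * X (k - d) i) + h k j)
    (he : ∀ k ≥ d, ∀ j, e k j = Y k j - ∑ i, θhat (k - d) i j * X (k - d) i)
    (hupdate : ∀ k ≥ d, ∀ i j, θhat k i j =
      θhat (k - d) i j + η k * (X (k - d) i * e k j) / (1 + ‖X (k - d)‖ ^ 2))
    (hψ : ∀ k, ψ k = θhat k - θ) :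
    (∀ k ≥ d, ∀ i j, ψ k i j =
        ψ (k - d) i j + η k * (X (k - d) i * e k j) / (1 + ‖X (k - d)‖ ^ 2))
    ∧ (∃ c > (0:ℝ), ∀ k ≥ d, η k = 1 →
        Real.sqrt (∑ i, ∑ j, (ψ k i j) ^ 2) ^ 2
          - Real.sqrt (∑ i, ∑ j, (ψ (k - d) i j) ^ 2) ^ 2
          ≤ -(η k * (‖e k‖ ^ 2 - 4 * ρ ^ 2) / (2 * (1 + ‖X (k - d)‖ ^ 2))) * c)
    ∧ (∃ B : ℝ, ∀ k, Real.sqrt (∑ i, ∑ j, (ψ k i j) ^ 2) ≤ B) := by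
  -- Part 1: parameter error recursion
  have part1 : ∀ k ≥ d, ∀ i j, ψ k i j =
      ψ (k - d) i j + η k * (X (k - d) i * e k j) / (1 + ‖X (k - d)‖ ^ 2) := by
    intro k hk i j
    simp only [hψ, Matrix.sub_apply]
    rw [hupdate k hk i j]; ring
  -- key identity : ψ(k-d)ᵀ X = h - e
  have hkey : ∀ k ≥ d, ∀ j, (∑ i, ψ (k - d) i j * X (k - d) i) = h k j - e k j := by
    intro k hk j
    have h1 : ∑ i, θhat (k - d) i j * X (k - d) i = Y k j - e k j := by
      have := he k hk j; linarith
    have h2 : ∑ i, θ i j * X (k - d) i = Y k j - h k j := by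
      have := hY k hk j; linarith
    calc ∑ i, ψ (k - d) i j * X (k - d) i
        = ∑ i, (θhat (k - d) i j * X (k - d) i - θ i j * X (k - d) i) := by
          apply Finset.sum_congr rfl; intro i _
          simp only [hψ, Matrix.sub_apply]; ring
      _ = (∑ i, θhat (k - d) i j * X (k - d) i) - ∑ i, θ i j * X (k - d) i := by
          rw [Finset.sum_sub_distrib]
      _ = h k j - e k j := by rw [h1, h2]; ring
  -- expansion of the squared Frobenius norm
  have hexp : ∀ k ≥ d, ∑ i, ∑ j, (ψ k i j) ^ 2
      = (∑ i, ∑ j, (ψ (k - d) i j) ^ 2)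
        + 2 * (η k / (1 + ‖X (k - d)‖ ^ 2)) * (∑ j, e k j * (h k j - e k j))
        + (η k / (1 + ‖X (k - d)‖ ^ 2)) ^ 2
            * (∑ i, (X (k - d) i) ^ 2) * (∑ j, (e k j) ^ 2) := by
    intro k hk
    have hrw : (∑ i, ∑ j, (ψ k i j) ^ 2)
        = ∑ i, ∑ j, (ψ (k - d) i j
            + (η k / (1 + ‖X (k - d)‖ ^ 2)) * (X (k - d) i * e k j)) ^ 2 := by
      apply Finset.sum_congr rfl; intro i _
      apply Finset.sum_congr rfl; intro j _
      rw [part1 k hk i j]; ring_nf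
    rw [hrw]
    refine (aux_expand p m (fun i j => ψ (k - d) i j) (fun i => X (k - d) i) (fun j => e k j) _).trans ?_
    beta_reduce
    congr 2
    congr 1
    apply Finset.sum_congr rfl; intro j _
    rw [hkey k hk j]
  -- core inequality (dead zone active)
  have hcore : ∀ k ≥ d, η k = 1 →
      (∑ i, ∑ j, (ψ k i j) ^ 2) - (∑ i, ∑ j, (ψ (k - d) i j) ^ 2)
        ≤ -((‖e k‖ ^ 2 - 4 * ρ ^ 2) / (2 * (1 + ‖X (k - d)‖ ^ 2))) := by
    intro k hk hk1
    have hE : (∑ j, (e k j) ^ 2) = ‖e k‖ ^ 2 := (norm_sq_euclid m (e k)).symm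
    have hP : (∑ i, (X (k - d) i) ^ 2) = ‖X (k - d)‖ ^ 2 :=
      (norm_sq_euclid p (X (k - d))).symm
    set nE := ‖e k‖ with hnE
    set P := ‖X (k - d)‖ ^ 2 with hPdef
    have hP0 : 0 ≤ P := by positivity
    have hN : (0:ℝ) < 1 + P := by linarith
    have hT : (∑ j, e k j * (h k j - e k j)) ≤ nE * ρ - nE ^ 2 := by
      have h1 : (∑ j, e k j * (h k j - e k j))
          = (∑ j, e k j * h k j) - ∑ j, (e k j) ^ 2 := by
        rw [← Finset.sum_sub_distrib]
        apply Finset.sum_congr rfl; intro j _; ring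
      have h2 : (∑ j, e k j * h k j) ≤ nE * ρ := by
        calc (∑ j, e k j * h k j) ≤ ‖e k‖ * ‖h k‖ := inner_euclid m (e k) (h k)
          _ ≤ nE * ρ := by
              apply mul_le_mul_of_nonneg_left (hh k) (norm_nonneg _)
      rw [h1, hE]; linarith
    rw [hexp k hk, hk1, hE, hP]
    have hne0 : 0 ≤ nE := norm_nonneg _
    have hscal : 2 * (2 * (nE * ρ - nE ^ 2) + nE ^ 2) ≤ -(nE ^ 2 - 4 * ρ ^ 2) := by
      nlinarith [sq_nonneg (nE - 2 * ρ)]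
    have hPE : (1 / (1 + P)) ^ 2 * P * nE ^ 2 ≤ nE ^ 2 / (1 + P) := by
      rw [div_pow, one_pow]
      rw [div_mul_eq_mul_div, div_mul_eq_mul_div, div_le_div_iff₀ (by positivity) hN]
      nlinarith [sq_nonneg nE, sq_nonneg (1 + P)]
    have hTdiv : 2 * (1 / (1 + P)) * (∑ j, e k j * (h k j - e k j))
        ≤ 2 * (nE * ρ - nE ^ 2) / (1 + P) := by
      rw [mul_one_div, div_mul_eq_mul_div, div_le_div_iff₀ hN hN]
      nlinarith [mul_le_mul_of_nonneg_right hT hN.le]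
    have hfin : 2 * (nE * ρ - nE ^ 2) / (1 + P) + nE ^ 2 / (1 + P)
        ≤ -((nE ^ 2 - 4 * ρ ^ 2) / (2 * (1 + P))) := by
      rw [← add_div, ← neg_div]
      rw [div_le_div_iff₀ hN (by positivity)]
      nlinarith [mul_le_mul_of_nonneg_right hscal hN.le]
    linarith
  -- monotonicity of the squared Frobenius norm along delay steps
  have hmono : ∀ k ≥ d, (∑ i, ∑ j, (ψ k i j) ^ 2) ≤ ∑ i, ∑ j, (ψ (k - d) i j) ^ 2 := by
    intro k hk
    by_cases hcase : ‖e k‖ > 2 * ρ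
    · have hk1 : η k = 1 := by rw [hη k, if_pos hcase]
      have := hcore k hk hk1
      have hnum : 0 ≤ ‖e k‖ ^ 2 - 4 * ρ ^ 2 := by nlinarith [norm_nonneg (e k)]
      have hden : (0:ℝ) < 2 * (1 + ‖X (k - d)‖ ^ 2) := by positivity
      have : (∑ i, ∑ j, (ψ k i j) ^ 2) - (∑ i, ∑ j, (ψ (k - d) i j) ^ 2) ≤ 0 := by
        have := hcore k hk hk1
        have h0 : 0 ≤ (‖e k‖ ^ 2 - 4 * ρ ^ 2) / (2 * (1 + ‖X (k - d)‖ ^ 2)) :=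
          div_nonneg hnum hden.le
        linarith
      linarith
    · have hk0 : η k = 0 := by rw [hη k, if_neg hcase]
      rw [hexp k hk, hk0]
      simp
  have hsqnn : ∀ k, (0:ℝ) ≤ ∑ i, ∑ j, (ψ k i j) ^ 2 := by
    intro k; positivity
  refine ⟨part1, ⟨1, one_pos, ?_⟩, ?_⟩
  · intro k hk hk1
    rw [Real.sq_sqrt (hsqnn k), Real.sq_sqrt (hsqnn (k - d)), hk1, mul_one]
    have := hcore k hk hk1
    calc (∑ i, ∑ j, (ψ k i j) ^ 2) - (∑ i, ∑ j, (ψ (k - d) i j) ^ 2)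
        ≤ -((‖e k‖ ^ 2 - 4 * ρ ^ 2) / (2 * (1 + ‖X (k - d)‖ ^ 2))) := this
      _ = -(1 * (‖e k‖ ^ 2 - 4 * ρ ^ 2) / (2 * (1 + ‖X (k - d)‖ ^ 2))) := by ring
  · have hne : (Finset.range d).Nonempty := ⟨0, by simp; omega⟩
    refine ⟨(Finset.range d).sup' hne
      (fun j => Real.sqrt (∑ i, ∑ l, (ψ j i l) ^ 2)), ?_⟩
    intro k
    induction k using Nat.strong_induction_on with
    | _ k ih =>
      by_cases hk : k < d
      · exact Finset.le_sup' (f := fun j => Real.sqrt (∑ i, ∑ l, (ψ j i l) ^ 2)) (Finset.mem_range.mpr hk)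
      · push_neg at hk
        have h1 : Real.sqrt (∑ i, ∑ j, (ψ k i j) ^ 2)
            ≤ Real.sqrt (∑ i, ∑ j, (ψ (k - d) i j) ^ 2) :=
          Real.sqrt_le_sqrt (hmono k hk)
        exact le_trans h1 (ih (k - d) (by omega))
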